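/- Let R be a ring with a descending G-filtration over an ordered group (G,<), and Rees(R) its Rees ring. Let I be the ideal of Rees(R) generated by the elements 1 - g for g < 1. Then Rees(R)/I is isomorphic to R as a ring. -/

import Mathlib

/-- Let `R` be a ring with a descending `G`-filtration over an ordered
group `(G,<)`, and `Rees(R) = ⊕_g (F g)·g ⊆ R[G]` its Rees ring, realized as the subring
`S` of the group ring `R[G]`.  Let `I` be the (two-sided) ideal of `S` generated by the
elements `1 - g` for `g < 1`.  Then `Rees(R)/I ≅ R` as rings; the isomorphism sends the
class of an element of the Rees ring to the sum of its coefficients. -/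
theorem rees_ring_mod_one_sub_g_iso_base_ring
    (R : Type) [Ring R]
    (G : Type) [Group G] [LinearOrder G]
    [CovariantClass G G (· * ·) (· < ·)]
    [CovariantClass G G (Function.swap (· * ·)) (· < ·)]
    (F : G → Set R)
    (hsub : ∀ g : G, (0 : R) ∈ F g ∧ (∀ x y, x ∈ F g → y ∈ F g → x + y ∈ F g) ∧
        (∀ x, x ∈ F g → -x ∈ F g))
    (hF1 : ∀ g h : G, g ≤ h → F h ⊆ F g)
    (hF2 : ∀ g h : G, ∀ x ∈ F g, ∀ y ∈ F h, x * y ∈ F (g * h))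
    (hF3 : (1 : R) ∈ F 1)
    (hF4 : ∀ x : R, ∃ g : G, x ∈ F g)
    -- the Rees ring, as a subring of the group ring `R[G]`
    (S : Subring (MonoidAlgebra R G))
    (hS : ∀ f : MonoidAlgebra R G, f ∈ S ↔ ∀ g : G, f.coeff g ∈ F g)
    -- the two-sided ideal of `S` generated by the elements `1 - g`, `g < 1`
    (I : TwoSidedIdeal S)
    (hI : I = TwoSidedIdeal.span
      {x : S | ∃ g : G, g < 1 ∧
        (x : MonoidAlgebra R G) = 1 - MonoidAlgebra.single g 1}) :
    ∃ e : I.ringCon.Quotient ≃+* R,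
      ∀ f : S, e (I.ringCon.mk' f) =
        Finsupp.sum (f : MonoidAlgebra R G).coeff (fun _ a => a) := by
  classical
  -- basic closure facts
  have hzero : ∀ g : G, (0 : R) ∈ F g := fun g => (hsub g).1
  have hsingle : ∀ (g : G) (r : R), r ∈ F g → MonoidAlgebra.single g r ∈ S := by
    intro g r hr
    rw [hS]
    intro h
    rw [MonoidAlgebra.coeff_single_apply]
    split_ifs with hgh
    · exact hgh ▸ hr
    · exact hzero h
  have honeF : ∀ g : G, g ≤ 1 → (1 : R) ∈ F g := fun g hg => hF1 g 1 hg hF3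
  have hgenS : ∀ h : G, h ≤ 1 →
      (1 - MonoidAlgebra.single h 1 : MonoidAlgebra R G) ∈ S := by
    intro h hh
    have h1 : (1 : MonoidAlgebra R G) = MonoidAlgebra.single 1 1 := rfl
    rw [h1]
    exact S.sub_mem (hsingle 1 1 hF3) (hsingle h 1 (honeF h hh))
  -- the augmentation ring hom
  set φ0 : MonoidAlgebra R G →+* R :=
    MonoidAlgebra.liftNCRingHom (RingHom.id R) 1 (fun _ _ => by simp) with hφ0def
  have hφ0single : ∀ (g : G) (r : R), φ0 (MonoidAlgebra.single g r) = r := by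
    intro g r
    show MonoidAlgebra.liftNC _ _ _ = r
    rw [MonoidAlgebra.liftNC_single]
    simp
  have hφ0 : ∀ x : MonoidAlgebra R G, φ0 x = Finsupp.sum x.coeff (fun _ a => a) := by
    intro x
    induction x using MonoidAlgebra.induction_linear with
    | zero => simp
    | add a b ha hb =>
        rw [φ0.map_add, ha, hb, MonoidAlgebra.coeff_add, Finsupp.sum_add_index (by simp) (by simp)]
    | single g r => rw [hφ0single, MonoidAlgebra.sum_single_index rfl]
  set φ : S →+* R := φ0.comp S.subtype with hφdef
  have hφ : ∀ f : S, φ f = Finsupp.sum (f : MonoidAlgebra R G).coeff (fun _ a => a) :=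
    fun f => hφ0 f.1
  -- I is contained in the kernel of φ
  have hker : ∀ x : S, x ∈ I → φ x = 0 := by
    intro x hx
    rw [hI, TwoSidedIdeal.mem_span_iff] at hx
    refine (TwoSidedIdeal.mem_ker φ).mp (hx (TwoSidedIdeal.ker φ) ?_)
    rintro y ⟨g, hg, hy⟩
    rw [SetLike.mem_coe, TwoSidedIdeal.mem_ker φ]
    have : φ y = φ0 (1 - MonoidAlgebra.single g 1) := by
      show φ0 (y : MonoidAlgebra R G) = _
      rw [hy]
    rw [this, φ0.map_sub, φ0.map_one, hφ0single, sub_self]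
  -- key: the kernel of φ is contained in I
  have key : ∀ f : S, φ f = 0 → f ∈ I := by
    intro f hsum
    set M : Finset G := insert 1 (f : MonoidAlgebra R G).coeff.support with hM
    have hMne : M.Nonempty := ⟨1, Finset.mem_insert_self _ _⟩
    set g0 : G := M.min' hMne with hg0def
    have hg0le1 : g0 ≤ 1 := Finset.min'_le M 1 (Finset.mem_insert_self _ _)
    have hg0le : ∀ g ∈ (f : MonoidAlgebra R G).coeff.support, g0 ≤ g :=
      fun g hg => Finset.min'_le M g (Finset.mem_insert_of_mem hg)
    set c : G → R := fun g => (f : MonoidAlgebra R G).coeff g with hc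
    have hcF : ∀ g, c g ∈ F g := (hS (f : MonoidAlgebra R G)).mp f.2
    have hsgmem : ∀ g, MonoidAlgebra.single g (c g) ∈ S :=
      fun g => hsingle g (c g) (hcF g)
    have htgmem : ∀ g, MonoidAlgebra.single g0 (c g) ∈ S := by
      intro g
      by_cases hg : g ∈ (f : MonoidAlgebra R G).coeff.support
      · exact hsingle g0 (c g) (hF1 g0 g (hg0le g hg) (hcF g))
      · have : c g = 0 := Finsupp.notMem_support_iff.mp hg
        rw [this]
        exact hsingle g0 0 (hzero g0)
    have hdiff : ∀ g, g0 ≤ g →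
        ((⟨MonoidAlgebra.single g (c g), hsgmem g⟩ : S) -
          (⟨MonoidAlgebra.single g0 (c g), htgmem g⟩ : S)) ∈ I := by
      intro g hle
      rcases hle.lt_or_eq with hlt | heq
      · set h : G := g⁻¹ * g0 with hh
        have hh1 : h < 1 := by
          have := mul_lt_mul_right hlt g⁻¹
          rwa [inv_mul_cancel] at this
        set w : S := ⟨1 - MonoidAlgebra.single h 1, hgenS h hh1.le⟩ with hw
        have hwI : w ∈ I := by
          rw [hI]
          exact TwoSidedIdeal.subset_span ⟨h, hh1, rfl⟩
        have hprod : (⟨MonoidAlgebra.single g (c g), hsgmem g⟩ : S) * w =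
            (⟨MonoidAlgebra.single g (c g), hsgmem g⟩ : S) -
              (⟨MonoidAlgebra.single g0 (c g), htgmem g⟩ : S) := by
          apply Subtype.ext
          push_cast
          rw [mul_sub, mul_one, MonoidAlgebra.single_mul_single, mul_one,
            mul_inv_cancel_left]
        rw [← hprod]
        exact I.mul_mem_left _ _ hwI
      · have : (⟨MonoidAlgebra.single g (c g), hsgmem g⟩ : S) =
            (⟨MonoidAlgebra.single g0 (c g), htgmem g⟩ : S) := by
          apply Subtype.ext
          simp [heq]
        rw [this, sub_self]
        exact I.zero_mem
    have hfsum : f = ∑ g ∈ (f : MonoidAlgebra R G).coeff.support,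
        ((⟨MonoidAlgebra.single g (c g), hsgmem g⟩ : S) -
          (⟨MonoidAlgebra.single g0 (c g), htgmem g⟩ : S)) := by
      apply Subtype.ext
      push_cast
      have hsfs : ∑ g ∈ (f : MonoidAlgebra R G).coeff.support, MonoidAlgebra.single g0 (c g) =
          MonoidAlgebra.single g0 (∑ g ∈ (f : MonoidAlgebra R G).coeff.support, c g) :=
        (map_sum (MonoidAlgebra.singleAddHom g0) _ _).symm
      rw [Finset.sum_sub_distrib, hsfs]
      have h1 : ∑ g ∈ (f : MonoidAlgebra R G).coeff.support, c g = 0 := by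
        rw [hφ f] at hsum
        exact hsum
      rw [h1, MonoidAlgebra.single_zero, sub_zero]
      exact (MonoidAlgebra.sum_coeff_single ((f : MonoidAlgebra R G))).symm
    rw [hfsum]
    exact I.finsetSum_mem _ _ (fun g hg => hdiff g (hg0le g hg))
  -- well-definedness and injectivity on the quotient
  have hwd : ∀ a b : S, I.ringCon a b → φ a = φ b := by
    intro a b hab
    have h0 := hker _ ((I.rel_iff a b).mp hab)
    rw [φ.map_sub] at h0
    exact sub_eq_zero.mp h0
  have key' : ∀ a b : S, φ a = φ b → I.ringCon a b := by
    intro a b hab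
    rw [I.rel_iff]
    exact key (a - b) (by rw [φ.map_sub, hab, sub_self])
  -- choice of representatives
  have hrep : ∀ r : R, ∃ s : S, φ s = r := by
    intro r
    obtain ⟨g, hg⟩ := hF4 r
    refine ⟨⟨MonoidAlgebra.single g r, hsingle g r hg⟩, ?_⟩
    rw [hφ]
    exact MonoidAlgebra.sum_single_index rfl
  choose rep hrep' using hrep
  refine ⟨{ toFun := fun x => Quotient.liftOn' x φ hwd,
            invFun := fun r => I.ringCon.mk' (rep r),
            left_inv := ?_, right_inv := ?_,
            map_mul' := ?_, map_add' := ?_ }, ?_⟩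
  · intro x
    refine Quotient.inductionOn' x (fun a => ?_)
    show I.ringCon.mk' (rep (φ a)) = Quotient.mk'' a
    exact Quotient.sound' (key' _ _ (hrep' (φ a)))
  · intro r
    exact hrep' r
  · intro x y
    refine Quotient.inductionOn₂' x y (fun a b => ?_)
    exact φ.map_mul a b
  · intro x y
    refine Quotient.inductionOn₂' x y (fun a b => ?_)
    exact φ.map_add a b
  · intro f
    exact hφ f
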